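/- arXiv:1603.07052 — 4 statements merged into one kernel-verified Lean document; each statement's English description precedes it below -/
import Mathlib

section
/- Let β > 2, γ > 0 and d > 0 be real numbers. Then the improper integral ∫₀^∞ (1 − 1/(1 + γ·d^β·x^{−β}))·x dx converges and equals A(β)·γ^{2/β}·d², where A(β) = (1/β)·Γ(2/β)·Γ(1 − 2/β). (Computation of the interference Laplace-functional exponent J₁ in the proof of Theorem 3, equation (23).) -/
open MeasureTheory Set


lemma beta_Ioo {s : ℝ} (h0 : 0 < s) (h1 : s < 1) :
    IntegrableOn (fun t : ℝ => t ^ (s - 1) * (1 - t) ^ (-s)) (Ioo 0 1) volume ∧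
      ∫ t in Ioo (0:ℝ) 1, t ^ (s - 1) * (1 - t) ^ (-s)
        = Real.Gamma s * Real.Gamma (1 - s) := by
  have hu : (0:ℝ) < Complex.re (s : ℂ) := by simpa using h0
  have hv : (0:ℝ) < Complex.re ((1 - s : ℝ) : ℂ) := by simpa using by linarith
  set F : ℝ → ℂ := fun x =>
    (x : ℂ) ^ ((s : ℂ) - 1) * (1 - (x : ℂ)) ^ (((1 - s : ℝ) : ℂ) - 1) with hFdef
  have hkey : ∀ x ∈ Icc (0:ℝ) 1,
      ((x ^ (s - 1) * (1 - x) ^ (-s) : ℝ) : ℂ) = F x := by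
    intro x hx
    have e1 : ((s - 1 : ℝ) : ℂ) = (s : ℂ) - 1 := by push_cast; ring
    have e2 : (((1 - s : ℝ)) : ℂ) - 1 = ((-s : ℝ) : ℂ) := by push_cast; ring
    rw [Complex.ofReal_mul, Complex.ofReal_cpow hx.1, Complex.ofReal_cpow (by linarith [hx.2] : (0:ℝ) ≤ 1 - x), hFdef]
    simp only
    rw [e1, e2]
    push_cast
    ring
  have hcI : IntegrableOn F (Ioc 0 1) volume := by
    have := Complex.betaIntegral_convergent hu hv
    rwa [intervalIntegrable_iff_integrableOn_Ioc_of_le zero_le_one] at this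
  have hIoc : IntegrableOn (fun t : ℝ => t ^ (s - 1) * (1 - t) ^ (-s)) (Ioc 0 1) volume := by
    have hre : IntegrableOn (fun x => (F x).re) (Ioc 0 1) volume := by
      exact hcI.re
    refine hre.congr_fun (fun x hx => ?_) measurableSet_Ioc
    beta_reduce
    rw [← hkey x ⟨hx.1.le, hx.2⟩]
    simp
  have hval : ∫ t in Ioc (0:ℝ) 1, t ^ (s - 1) * (1 - t) ^ (-s)
      = Real.Gamma s * Real.Gamma (1 - s) := by
    have hb := Complex.Gamma_mul_Gamma_eq_betaIntegral hu hv
    have hsum : (s : ℂ) + ((1 - s : ℝ) : ℂ) = 1 := by push_cast; ring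
    rw [hsum, Complex.Gamma_one, one_mul] at hb
    have hint : Complex.betaIntegral (s : ℂ) ((1 - s : ℝ) : ℂ)
        = ((∫ t in Ioc (0:ℝ) 1, t ^ (s - 1) * (1 - t) ^ (-s) : ℝ) : ℂ) := by
      rw [Complex.betaIntegral]
      rw [show (∫ x : ℝ in (0:ℝ)..1, (x : ℂ) ^ ((s:ℂ) - 1) * (1 - (x:ℂ)) ^ (((1-s:ℝ):ℂ) - 1))
          = ∫ x : ℝ in (0:ℝ)..1, ((x ^ (s - 1) * (1 - x) ^ (-s) : ℝ) : ℂ) from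
        intervalIntegral.integral_congr (fun x hx => by
          rw [hkey x (by rwa [uIcc_of_le zero_le_one] at hx)])]
      rw [intervalIntegral.integral_ofReal, intervalIntegral.integral_of_le zero_le_one]
    rw [hint, Complex.Gamma_ofReal, Complex.Gamma_ofReal] at hb
    exact_mod_cast hb.symm
  constructor
  · exact hIoc.mono_set Ioo_subset_Ioc_self
  · rw [← hval]
    exact (integral_Ioc_eq_integral_Ioo).symm


lemma mellin_one_add {s : ℝ} (h0 : 0 < s) (h1 : s < 1) :
    IntegrableOn (fun u : ℝ => u ^ (s - 1) / (1 + u)) (Ioi 0) volume ∧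
      ∫ u in Ioi (0:ℝ), u ^ (s - 1) / (1 + u)
        = Real.Gamma s * Real.Gamma (1 - s) := by
  obtain ⟨hI, hV⟩ := beta_Ioo h0 h1
  set g : ℝ → ℝ := fun t => t ^ (s - 1) * (1 - t) ^ (-s) with hg
  set f : ℝ → ℝ := fun u => u / (1 + u) with hf
  set f' : ℝ → ℝ := fun u => 1 / (1 + u) ^ 2 with hf'
  have hderiv : ∀ x ∈ Ioi (0:ℝ), HasDerivWithinAt f (f' x) (Ioi 0) x := by
    intro x hx
    simp only [mem_Ioi] at hx
    have hne : (1 : ℝ) + x ≠ 0 := by positivity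
    have h := ((hasDerivAt_id x).div ((hasDerivAt_id x).const_add 1) hne).hasDerivWithinAt
      (s := Ioi 0)
    simp only [id_eq] at h
    refine h.congr_deriv ?_
    show _ = 1 / (1 + x) ^ 2
    congr 1
    ring
  have hinj : InjOn f (Ioi 0) := by
    intro a ha b hb h
    simp only [mem_Ioi] at ha hb
    have ha' : (1:ℝ) + a ≠ 0 := by positivity
    have hb' : (1:ℝ) + b ≠ 0 := by positivity
    rw [hf] at h
    field_simp at h
    linarith
  have himg : f '' Ioi 0 = Ioo 0 1 := by
    ext y
    constructor
    · rintro ⟨x, hx, rfl⟩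
      have hx' : (0:ℝ) < x := hx
      have h1x : (0:ℝ) < 1 + x := by linarith
      refine ⟨by exact div_pos hx' h1x, ?_⟩
      show x / (1 + x) < 1
      rw [div_lt_one h1x]; linarith
    · rintro ⟨hy0, hy1⟩
      refine ⟨y / (1 - y), ?_, ?_⟩
      · have : (0:ℝ) < 1 - y := by linarith
        exact mem_Ioi.2 (by positivity)
      · have h1y : (1:ℝ) - y ≠ 0 := sub_ne_zero.2 (by linarith)
        show y / (1 - y) / (1 + y / (1 - y)) = y
        rw [div_eq_iff, one_add_div h1y]
        · field_simp
          ring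
        · have : (0:ℝ) < 1 - y := by linarith
          have : (0:ℝ) < 1 + y / (1 - y) := by positivity
          linarith
  have heq : ∀ x ∈ Ioi (0:ℝ), |f' x| • g (f x) = x ^ (s - 1) / (1 + x) := by
    intro x hx
    simp only [mem_Ioi] at hx
    have hp : (0:ℝ) < 1 + x := by linarith
    have e0 : |f' x| = (1 + x) ^ (-2 : ℝ) := by
      have hfx : f' x = 1 / (1 + x) ^ 2 := rfl
      rw [hfx, abs_of_pos (by positivity), Real.rpow_neg hp.le,
        show ((1 + x) : ℝ) ^ (2:ℝ) = (1 + x) ^ (2:ℕ) from by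
          rw [← Real.rpow_natCast]; norm_num, one_div]
    have e1 : (1 : ℝ) - x / (1 + x) = 1 / (1 + x) := by field_simp; ring
    have e2 : (x / (1 + x)) ^ (s - 1) = x ^ (s - 1) * (1 + x) ^ (-(s - 1)) := by
      rw [Real.div_rpow hx.le hp.le, Real.rpow_neg hp.le, div_eq_mul_inv]
    have e3 : ((1 : ℝ) / (1 + x)) ^ (-s) = (1 + x) ^ s := by
      rw [one_div, ← Real.rpow_neg_one (1 + x), ← Real.rpow_mul hp.le]
      norm_num
    rw [hg, smul_eq_mul]
    simp only
    rw [e0, e1, e2, e3]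
    rw [show (1 + x) ^ (-2:ℝ) * (x ^ (s - 1) * (1 + x) ^ (-(s - 1)) * (1 + x) ^ s)
        = x ^ (s - 1) * ((1 + x) ^ (-2:ℝ) * (1 + x) ^ (-(s - 1)) * (1 + x) ^ s) by ring,
      ← Real.rpow_add hp, ← Real.rpow_add hp,
      show (-2 + -(s - 1) + s : ℝ) = -1 by ring, Real.rpow_neg_one]
    rw [div_eq_mul_inv]
  constructor
  · rw [← himg] at hI
    rw [integrableOn_image_iff_integrableOn_abs_deriv_smul measurableSet_Ioi hderiv hinj] at hI
    exact hI.congr_fun heq measurableSet_Ioi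
  · rw [← himg,
      integral_image_eq_integral_abs_deriv_smul measurableSet_Ioi hderiv hinj] at hV
    rw [← hV]
    exact setIntegral_congr_fun measurableSet_Ioi (fun x hx => (heq x hx).symm)

/-- Equation (23) of the paper: the interference Laplace-functional exponent `J₁`.
For `β > 2`, `γ > 0`, `d > 0`, the improper integral
`∫₀^∞ (1 - 1/(1 + γ d^β x^{-β})) x dx` converges and equals `A(β) γ^{2/β} d²`,
with `A(β) = (1/β) Γ(2/β) Γ(1 - 2/β)`. -/
theorem integral_J1 (β γ d : ℝ) (hβ : 2 < β) (hγ : 0 < γ) (hd : 0 < d) :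
    IntegrableOn (fun x : ℝ => (1 - 1 / (1 + γ * d ^ β * x ^ (-β))) * x) (Ioi 0) volume ∧
      ∫ x in Ioi (0 : ℝ), (1 - 1 / (1 + γ * d ^ β * x ^ (-β))) * x
        = ((1 / β) * Real.Gamma (2 / β) * Real.Gamma (1 - 2 / β)) * γ ^ (2 / β) * d ^ 2 := by
  obtain ⟨hI, hV⟩ := mellin_one_add (s := 2/β)
    (by positivity) ((div_lt_one (by linarith)).2 hβ)
  have hβ0 : (0:ℝ) < β := by linarith
  set s : ℝ := 2 / β with hs
  set c : ℝ := γ * d ^ β with hcdef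
  have hc : 0 < c := by
    have : (0:ℝ) < d ^ β := Real.rpow_pos_of_pos hd β
    positivity
  set F : ℝ → ℝ := fun u => u ^ (s - 1) / (1 + u) with hF
  set f : ℝ → ℝ := fun x => x ^ β / c with hf
  set f' : ℝ → ℝ := fun x => β * x ^ (β - 1) / c with hf'
  have hderiv : ∀ x ∈ Ioi (0:ℝ), HasDerivWithinAt f (f' x) (Ioi 0) x := by
    intro x hx
    simp only [mem_Ioi] at hx
    exact ((Real.hasDerivAt_rpow_const (Or.inl hx.ne')).div_const c).hasDerivWithinAt
  have hinj : InjOn f (Ioi 0) := by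
    intro a ha b hb h
    simp only [mem_Ioi] at ha hb
    have h' : a ^ β = b ^ β := by
      have h2 : a ^ β / c = b ^ β / c := h
      field_simp at h2
      exact h2
    rcases lt_trichotomy a b with hab | hab | hab
    · exact absurd (Real.rpow_lt_rpow ha.le hab hβ0) (by rw [h']; exact lt_irrefl _)
    · exact hab
    · exact absurd (Real.rpow_lt_rpow hb.le hab hβ0) (by rw [h']; exact lt_irrefl _)
  have himg : f '' Ioi 0 = Ioi 0 := by
    ext y
    constructor
    · rintro ⟨x, hx, rfl⟩
      simp only [mem_Ioi] at hx ⊢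
      have : (0:ℝ) < x ^ β := Real.rpow_pos_of_pos hx β
      exact div_pos this hc
    · intro hy
      simp only [mem_Ioi] at hy
      refine ⟨(c * y) ^ β⁻¹, ?_, ?_⟩
      · exact mem_Ioi.2 (Real.rpow_pos_of_pos (by positivity) _)
      · show ((c * y) ^ β⁻¹) ^ β / c = y
        rw [Real.rpow_inv_rpow (by positivity) hβ0.ne']
        field_simp
  -- the simplified integrand
  have hsimp : ∀ x ∈ Ioi (0:ℝ),
      (1 - 1 / (1 + γ * d ^ β * x ^ (-β))) * x = c * x / (x ^ β + c) := by
    intro x hx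
    simp only [mem_Ioi] at hx
    have hxβ : (0:ℝ) < x ^ β := Real.rpow_pos_of_pos hx β
    have hneg : x ^ (-β) = (x ^ β)⁻¹ := Real.rpow_neg hx.le β
    rw [← hcdef, hneg]
    have h1 : (0:ℝ) < 1 + c * (x ^ β)⁻¹ := by positivity
    field_simp
    ring
  -- pointwise identity for the substitution
  have heq : ∀ x ∈ Ioi (0:ℝ),
      |f' x| • F (f x) = (β * c ^ (-s)) * (c * x / (x ^ β + c)) := by
    intro x hx
    simp only [mem_Ioi] at hx
    have hxβ : (0:ℝ) < x ^ β := Real.rpow_pos_of_pos hx β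
    have habs : |f' x| = β * x ^ (β - 1) / c := by
      have : (0:ℝ) < x ^ (β - 1) := Real.rpow_pos_of_pos hx _
      exact abs_of_pos (by positivity)
    have hβs : β * s = 2 := by rw [hs]; field_simp
    have hFfx : F (f x) = (x ^ β / c) ^ (s - 1) * (c / (x ^ β + c)) := by
      show (x ^ β / c) ^ (s - 1) / (1 + x ^ β / c) = _
      rw [show (1:ℝ) + x ^ β / c = (x ^ β + c) / c by field_simp; ring,
        div_eq_mul_inv, inv_div]
    have e2 : (x ^ β / c) ^ (s - 1) = x ^ (β * (s - 1)) * c ^ (-(s - 1)) := by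
      rw [Real.div_rpow hxβ.le hc.le, ← Real.rpow_mul hx.le, Real.rpow_neg hc.le,
        div_eq_mul_inv]
    have ec : c ^ (-(s - 1)) = c ^ (-s) * c := by
      rw [show -(s - 1) = -s + 1 by ring, Real.rpow_add hc, Real.rpow_one]
    have ex : x ^ (β - 1) * x ^ (β * (s - 1)) = x := by
      rw [← Real.rpow_add hx, show β - 1 + β * (s - 1) = (1:ℝ) by linear_combination hβs,
        Real.rpow_one]
    have key : ∀ P Q R T : ℝ, T ≠ 0 → P * Q = x →
        (β * P / c) * (Q * (R * c) * (c / T)) = β * R * (c * x / T) := by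
      intro P Q R T hT hPQ
      rw [← hPQ]
      field_simp
    rw [smul_eq_mul, habs, hFfx, e2, ec]
    exact key _ _ _ _ (by positivity) ex
  -- put it together
  constructor
  · rw [← himg] at hI
    rw [integrableOn_image_iff_integrableOn_abs_deriv_smul measurableSet_Ioi hderiv hinj] at hI
    have hI2 : IntegrableOn (fun x : ℝ => (β * c ^ (-s)) * (c * x / (x ^ β + c)))
        (Ioi 0) volume := hI.congr_fun heq measurableSet_Ioi
    have hk : (β * c ^ (-s)) ≠ 0 := by
      have : (0:ℝ) < c ^ (-s) := Real.rpow_pos_of_pos hc _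
      positivity
    have hI3 : IntegrableOn (fun x : ℝ => c * x / (x ^ β + c)) (Ioi 0) volume := by
      have h4 : IntegrableOn (fun x : ℝ => (β * c ^ (-s))⁻¹ * ((β * c ^ (-s)) * (c * x / (x ^ β + c))))
          (Ioi 0) volume := hI2.const_mul _
      refine h4.congr_fun (fun x _ => ?_) measurableSet_Ioi
      beta_reduce
      rw [inv_mul_cancel_left₀ hk]
    exact hI3.congr_fun (fun x hx => (hsimp x hx).symm) measurableSet_Ioi
  · rw [← himg, integral_image_eq_integral_abs_deriv_smul measurableSet_Ioi hderiv hinj] at hV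
    rw [setIntegral_congr_fun measurableSet_Ioi heq, integral_const_mul] at hV
    have hcs : (0:ℝ) < c ^ (-s) := Real.rpow_pos_of_pos hc _
    have hint : ∫ x in Ioi (0:ℝ), c * x / (x ^ β + c)
        = (β * c ^ (-s))⁻¹ * (Real.Gamma s * Real.Gamma (1 - s)) := by
      rw [← hV]
      field_simp
    rw [setIntegral_congr_fun measurableSet_Ioi hsimp, hint]
    have hcs2 : c ^ s = γ ^ (2/β) * d ^ 2 := by
      rw [hcdef, Real.mul_rpow hγ.le (Real.rpow_pos_of_pos hd β).le,
        ← Real.rpow_mul hd.le, show β * s = 2 from by rw [hs]; field_simp, hs]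
      norm_num
    have hinv : (c ^ (-s))⁻¹ = c ^ s := by rw [Real.rpow_neg hc.le, inv_inv]
    rw [mul_inv, hinv, hcs2]
    ring
end

section
/- Let β > 2, γ > 0 and d > 0 be real numbers. Then the improper integral ∫_d^∞ (1 − 1/(1 + γ·d^β·x^{−β}))·x dx converges and equals (d²/2)·u(γ, β), where u(γ, β) := γ^{2/β} · ∫_{γ^{−2/β}}^∞ (1 + t^{β/2})^{−1} dt. (Computation of the exponent J₂ in the proof of Corollary 4, equation (33), where interferers lie beyond the nearest serving RRH at distance d.) -/
open MeasureTheory Set Real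

private lemma J2_g_integrable (β c : ℝ) (hβ : 2 < β) (hc : 0 < c) :
    IntegrableOn (fun t : ℝ => (1 + t ^ (β / 2))⁻¹) (Ici c) := by
  rw [integrableOn_Ici_iff_integrableOn_Ioi]
  have hcont : ContinuousOn (fun t : ℝ => (1 + t ^ (β / 2))⁻¹) (Ioi 0) := by
    apply ContinuousOn.inv₀
    · exact continuousOn_const.add (continuousOn_id.rpow_const fun t ht => Or.inl (ne_of_gt ht))
    · intro t ht
      have : (0:ℝ) < t ^ (β/2) := rpow_pos_of_pos ht _
      positivity
  refine (integrableOn_Ioi_rpow_of_lt (a := -(β/2)) (by linarith) hc).mono'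
    ((hcont.mono (Ioi_subset_Ioi hc.le)).aestronglyMeasurable measurableSet_Ioi) ?_
  filter_upwards [ae_restrict_mem measurableSet_Ioi] with t ht
  have ht0 : (0:ℝ) < t := hc.trans ht
  have h1 : (0:ℝ) < t ^ (β/2) := rpow_pos_of_pos ht0 _
  rw [Real.norm_eq_abs, abs_of_nonneg (by positivity)]
  rw [rpow_neg ht0.le]
  gcongr
  linarith

private lemma J2_h_integrable (β γ d : ℝ) (hβ : 2 < β) (hγ : 0 < γ) (hd : 0 < d) :
    IntegrableOn (fun x : ℝ => x * (1 + γ⁻¹ * (x / d) ^ β)⁻¹) (Ici d) := by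
  rw [integrableOn_Ici_iff_integrableOn_Ioi]
  have hcont : ContinuousOn (fun x : ℝ => x * (1 + γ⁻¹ * (x / d) ^ β)⁻¹) (Ioi d) := by
    apply continuousOn_id.mul
    apply ContinuousOn.inv₀
    · exact continuousOn_const.add (continuousOn_const.mul
        ((continuousOn_id.div_const d).rpow_const fun x hx =>
          Or.inl (by have : (0:ℝ) < x := hd.trans hx; positivity)))
    · intro x hx
      have hx0 : (0:ℝ) < x := hd.trans hx
      have : (0:ℝ) < (x/d) ^ β := rpow_pos_of_pos (by positivity) _
      positivity
  refine ((integrableOn_Ioi_rpow_of_lt (a := 1 - β) (by linarith) hd).const_mul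
    (γ * d ^ β)).mono' (hcont.aestronglyMeasurable measurableSet_Ioi) ?_
  filter_upwards [ae_restrict_mem measurableSet_Ioi] with x hx
  have hx0 : (0:ℝ) < x := hd.trans hx
  have hb : (0:ℝ) < γ⁻¹ * (x/d) ^ β := by
    have : (0:ℝ) < (x/d) ^ β := rpow_pos_of_pos (by positivity) _
    positivity
  simp only [Real.norm_eq_abs]
  rw [abs_of_nonneg (show (0:ℝ) ≤ x * (1 + γ⁻¹ * (x/d) ^ β)⁻¹ by positivity)]
  have h1 : (1 + γ⁻¹ * (x/d) ^ β)⁻¹ ≤ (γ⁻¹ * (x/d) ^ β)⁻¹ := by gcongr; linarith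
  have h2 : (γ⁻¹ * (x/d) ^ β)⁻¹ = γ * d ^ β * x ^ (-β) := by
    rw [div_rpow hx0.le hd.le, rpow_neg hx0.le]
    field_simp
  calc x * (1 + γ⁻¹ * (x/d) ^ β)⁻¹ ≤ x * (γ * d ^ β * x ^ (-β)) := by
        rw [← h2]; exact mul_le_mul_of_nonneg_left h1 hx0.le
    _ = γ * d ^ β * x ^ (1 - β) := by
        rw [sub_eq_add_neg, rpow_add hx0, rpow_one]; ring

private lemma J2_ptwise_B (β γ d x : ℝ) (hγ : 0 < γ) (hd : 0 < d) (hx : d < x) :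
    (1 - 1 / (1 + γ * d ^ β * x ^ (-β))) * x
      = x * (1 + γ⁻¹ * (x / d) ^ β)⁻¹ := by
  have hx0 : (0:ℝ) < x := hd.trans hx
  have hxβ : (0:ℝ) < x ^ β := rpow_pos_of_pos hx0 _
  have hdβ : (0:ℝ) < d ^ β := rpow_pos_of_pos hd _
  rw [rpow_neg hx0.le, div_rpow hx0.le hd.le]
  have h1 : 1 + γ * d ^ β * (x ^ β)⁻¹ = (x ^ β + γ * d ^ β) / x ^ β := by
    field_simp
  have h2 : 1 + γ⁻¹ * (x ^ β / d ^ β) = (γ * d ^ β + x ^ β) / (γ * d ^ β) := by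
    field_simp
  rw [h1, h2]
  have hs : (0:ℝ) < x ^ β + γ * d ^ β := by positivity
  field_simp
  ring

private lemma J2_ptwise_A (β γ d x : ℝ) (hβ : 2 < β) (hγ : 0 < γ) (hd : 0 < d) (hx : d < x) :
    (1 + (γ ^ (-(2/β)) * (x / d) ^ 2) ^ (β / 2))⁻¹ * (γ ^ (-(2/β)) * (2 * x / d ^ 2))
      = (2 * γ ^ (-(2/β)) / d ^ 2) * (x * (1 + γ⁻¹ * (x / d) ^ β)⁻¹) := by
  have hx0 : (0:ℝ) < x := hd.trans hx
  have hxd : (0:ℝ) ≤ x / d := by positivity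
  have hc : (0:ℝ) < γ ^ (-(2/β)) := rpow_pos_of_pos hγ _
  have e1 : (γ ^ (-(2/β)) * (x / d) ^ 2) ^ (β / 2) = γ⁻¹ * (x / d) ^ β := by
    rw [mul_rpow hc.le (by positivity), ← rpow_natCast (x/d) 2, ← rpow_mul hxd,
        ← rpow_mul hγ.le]
    have hβ0 : β ≠ 0 := by linarith
    rw [show -(2/β) * (β/2) = -1 by field_simp, rpow_neg_one,
        show ((2:ℕ):ℝ) * (β/2) = β by push_cast; ring]
  rw [e1]; ring

/-- Equation (33) of the paper: the exponent `J₂`, where interferers lie beyond the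
nearest serving RRH at distance `d`.  For `β > 2`, `γ > 0`, `d > 0`, the improper
integral `∫_d^∞ (1 - 1/(1 + γ d^β x^{-β})) x dx` converges and equals
`(d²/2) u(γ, β)`, where `u(γ, β) = γ^{2/β} ∫_{γ^{-2/β}}^∞ (1 + t^{β/2})⁻¹ dt`. -/
theorem integral_J2 (β γ d : ℝ) (hβ : 2 < β) (hγ : 0 < γ) (hd : 0 < d) :
    IntegrableOn (fun x : ℝ => (1 - 1 / (1 + γ * d ^ β * x ^ (-β))) * x) (Ioi d) volume ∧
      ∫ x in Ioi d, (1 - 1 / (1 + γ * d ^ β * x ^ (-β))) * x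
        = (d ^ 2 / 2) *
            (γ ^ (2 / β) * ∫ t in Ioi (γ ^ (-(2 / β))), (1 + t ^ (β / 2))⁻¹) := by
  set c : ℝ := γ ^ (-(2/β)) with hc_def
  have hc : 0 < c := rpow_pos_of_pos hγ _
  set f : ℝ → ℝ := fun x => c * (x/d)^2 with hf_def
  set f' : ℝ → ℝ := fun x => c * (2*x/d^2) with hf'_def
  set g : ℝ → ℝ := fun t => (1 + t ^ (β/2))⁻¹ with hg_def
  set h : ℝ → ℝ := fun x => x * (1 + γ⁻¹ * (x/d) ^ β)⁻¹ with hh_def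
  have hhint : IntegrableOn h (Ici d) := J2_h_integrable β γ d hβ hγ hd
  have hhintIoi : IntegrableOn h (Ioi d) := hhint.mono_set Ioi_subset_Ici_self
  have hBeq : EqOn h (fun x : ℝ => (1 - 1 / (1 + γ * d ^ β * x ^ (-β))) * x) (Ioi d) :=
    fun x hx => (J2_ptwise_B β γ d x hγ hd hx).symm
  have hL : IntegrableOn (fun x : ℝ => (1 - 1 / (1 + γ * d ^ β * x ^ (-β))) * x) (Ioi d) :=
    hhintIoi.congr_fun hBeq measurableSet_Ioi
  refine ⟨hL, ?_⟩
  -- change of variables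
  have hf : ContinuousOn f (Ici d) := by
    apply Continuous.continuousOn; fun_prop
  have hft : Filter.Tendsto f Filter.atTop Filter.atTop := by
    have : Filter.Tendsto (fun x : ℝ => c/d^2 * x^2) Filter.atTop Filter.atTop :=
      (Filter.tendsto_pow_atTop two_ne_zero).const_mul_atTop (by positivity)
    exact this.congr (fun x => by simp only [hf_def]; ring)
  have hff' : ∀ x ∈ Ioi d, HasDerivWithinAt f (f' x) (Ioi x) x := by
    intro x hx
    have h1 : HasDerivAt (fun y : ℝ => (y/d)^2) ((2:ℕ) * (x/d)^(2-1) * (1/d)) x :=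
      ((hasDerivAt_id x).div_const d).pow 2
    have h2 : HasDerivAt f (f' x) x := by
      convert h1.const_mul c using 1
      · rfl
      · rfl
      simp only [hf'_def]
      push_cast
      ring
    exact h2.hasDerivWithinAt
  have hgcont0 : ContinuousOn g (Ioi 0) := by
    apply ContinuousOn.inv₀
    · exact continuousOn_const.add (continuousOn_id.rpow_const fun t ht => Or.inl (ne_of_gt ht))
    · intro t ht
      have : (0:ℝ) < t ^ (β/2) := rpow_pos_of_pos ht _
      positivity
  have hg_cont : ContinuousOn g (f '' Ioi d) := by
    apply hgcont0.mono
    rintro t ⟨x, hx, rfl⟩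
    have hx0 : (0:ℝ) < x := hd.trans hx
    have : (0:ℝ) < (x/d)^2 := by positivity
    exact mul_pos hc this
  have hg1 : IntegrableOn g (f '' Ici d) := by
    apply (J2_g_integrable β c hβ hc).mono_set
    rintro t ⟨x, hx, rfl⟩
    have h1 : (1:ℝ) ≤ x/d := (one_le_div hd).mpr hx
    have h2 : (1:ℝ) ≤ (x/d)^2 := one_le_pow₀ h1
    exact le_mul_of_one_le_right hc.le h2
  have hAeq : EqOn (fun x => (2*c/d^2) * h x) (fun x => (g ∘ f) x * f' x) (Ioi d) :=
    fun x hx => (J2_ptwise_A β γ d x hβ hγ hd hx).symm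
  have hg2 : IntegrableOn (fun x => (g ∘ f) x * f' x) (Ici d) := by
    rw [integrableOn_Ici_iff_integrableOn_Ioi]
    have h3 : IntegrableOn (fun x => (2*c/d^2) * h x) (Ioi d) := hhintIoi.const_mul _
    exact h3.congr_fun hAeq measurableSet_Ioi
  have key := MeasureTheory.integral_comp_mul_deriv_Ioi hf hft hff' hg_cont hg1 hg2
  have hfd : f d = c := by simp [hf_def, div_self hd.ne']
  rw [hfd] at key
  have e1 : ∫ x in Ioi d, (g ∘ f) x * f' x = (2*c/d^2) * ∫ x in Ioi d, h x := by
    rw [← MeasureTheory.integral_const_mul]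
    exact (setIntegral_congr_fun measurableSet_Ioi hAeq).symm
  have e2 : ∫ x in Ioi d, (1 - 1 / (1 + γ * d ^ β * x ^ (-β))) * x = ∫ x in Ioi d, h x :=
    (setIntegral_congr_fun measurableSet_Ioi hBeq).symm
  have hγc : γ ^ (2/β) * c = 1 := by
    rw [hc_def, ← rpow_add hγ]; simp
  rw [e2]
  rw [e1] at key
  have hd2 : (d:ℝ)^2 ≠ 0 := by positivity
  -- key : (2*c/d^2) * ∫ h = ∫ t in Ioi c, g t
  rw [← key]
  field_simp
  linear_combination (-(∫ x in Ioi d, h x)) * hγc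
end

section
/- Let L ≥ 1 and for each l = 1, …, L let X_l be a nonnegative random variable, let μ > 0, a > 0, and let 0 < θ_l^T ≤ θ_l^C be QoS exponents. With E_l(θ) = −(1/(θ·a))·ln E[(1 + X_l)^{−μ·θ·a}], define for P ∈ [0, 1] the average effective capacity Ē(P) = P·Σ_{l=1}^L E_l(θ_l^T) + (1 − P)·Σ_{l=1}^L E_l(θ_l^C). Then Ē is nondecreasing on [0, 1]; in particular the effective-capacity gain of cluster caching ΔĒ = Ē(P_hit) − Ē(0) = P_hit·Σ_{l=1}^L ( E_l(θ_l^T) − E_l(θ_l^C) ) is nonnegative and nondecreasing in the hit ratio P_hit. (Equations (19) and (25): the performance gain of cluster content caching grows with the hit ratio.) -/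
open MeasureTheory

/-- The effective capacity `E(θ) = -(1/(θ a)) ln 𝔼[(1 + X)^{-μ θ a}]` of a block
fading channel with (nonnegative) receive SINR `X`, spectral efficiency `μSE` and
`a = W T̄`. -/
noncomputable def effectiveCapacity {Ω : Type*} [MeasurableSpace Ω]
    (μ : Measure Ω) (X : Ω → ℝ) (μSE a θ : ℝ) : ℝ :=
  -(1 / (θ * a)) * Real.log (∫ ω, (1 + X ω) ^ (-(μSE * θ * a)) ∂μ)

lemma effectiveCapacity_aux_integrable {Ω : Type*} [MeasurableSpace Ω]
    (μ : Measure Ω) [IsProbabilityMeasure μ] (X : Ω → ℝ)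
    (hX : Measurable X) (hX0 : ∀ ω, 0 ≤ X ω) {c : ℝ} (hc : 0 ≤ c) :
    Integrable (fun ω => (1 + X ω) ^ (-c)) μ := by
  have hmeas : Measurable (fun ω => (1 + X ω) ^ (-c)) := by fun_prop
  refine (integrable_const (1 : ℝ)).mono' hmeas.aestronglyMeasurable ?_
  filter_upwards with ω
  have h1 : (1 : ℝ) ≤ 1 + X ω := by linarith [hX0 ω]
  have hpos : (0 : ℝ) < (1 + X ω) ^ (-c) := Real.rpow_pos_of_pos (by linarith) _
  rw [Real.norm_eq_abs, abs_of_pos hpos]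
  exact Real.rpow_le_one_of_one_le_of_nonpos h1 (by linarith)

lemma effectiveCapacity_aux_pos {Ω : Type*} [MeasurableSpace Ω]
    (μ : Measure Ω) [IsProbabilityMeasure μ] (X : Ω → ℝ)
    (hX : Measurable X) (hX0 : ∀ ω, 0 ≤ X ω) {c : ℝ} (hc : 0 ≤ c) :
    0 < ∫ ω, (1 + X ω) ^ (-c) ∂μ := by
  have hpos : ∀ ω, (0 : ℝ) < (1 + X ω) ^ (-c) := fun ω =>
    Real.rpow_pos_of_pos (by linarith [hX0 ω]) _
  rw [MeasureTheory.integral_pos_iff_support_of_nonneg (fun ω => (hpos ω).le)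
    (effectiveCapacity_aux_integrable μ X hX hX0 hc)]
  have : Function.support (fun ω => (1 + X ω) ^ (-c)) = Set.univ := by
    ext ω; simp [Function.mem_support, (hpos ω).ne']
  rw [this]
  simp

/-- Effective capacity is nonincreasing in the QoS exponent (Lyapunov/Jensen). -/
lemma effectiveCapacity_antitone {Ω : Type*} [MeasurableSpace Ω]
    (μ : Measure Ω) [IsProbabilityMeasure μ] (X : Ω → ℝ)
    (hX : Measurable X) (hX0 : ∀ ω, 0 ≤ X ω)
    (μSE a : ℝ) (hμSE : 0 < μSE) (ha : 0 < a)
    {θ₁ θ₂ : ℝ} (h1 : 0 < θ₁) (h12 : θ₁ ≤ θ₂) :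
    effectiveCapacity μ X μSE a θ₂ ≤ effectiveCapacity μ X μSE a θ₁ := by
  have h2 : 0 < θ₂ := lt_of_lt_of_le h1 h12
  set c₁ : ℝ := μSE * θ₁ * a with hc₁
  set c₂ : ℝ := μSE * θ₂ * a with hc₂
  have hc₁0 : 0 < c₁ := by positivity
  have hc₂0 : 0 < c₂ := by positivity
  set p : ℝ := θ₁ / θ₂ with hp
  have hp0 : 0 < p := div_pos h1 h2
  have hp1 : p ≤ 1 := div_le_one_of_le₀ h12 h2.le
  set A₁ : ℝ := ∫ ω, (1 + X ω) ^ (-c₁) ∂μ with hA₁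
  set A₂ : ℝ := ∫ ω, (1 + X ω) ^ (-c₂) ∂μ with hA₂
  have hA₁pos : 0 < A₁ := effectiveCapacity_aux_pos μ X hX hX0 hc₁0.le
  have hA₂pos : 0 < A₂ := effectiveCapacity_aux_pos μ X hX hX0 hc₂0.le
  -- Jensen: A₁ = ∫ Y^p ≤ (∫ Y)^p = A₂^p where Y = (1+X)^(-c₂)
  have hcomp : ∀ ω, ((1 + X ω) ^ (-c₂)) ^ p = (1 + X ω) ^ (-c₁) := by
    intro ω
    rw [← Real.rpow_mul (by linarith [hX0 ω] : (0:ℝ) ≤ 1 + X ω)]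
    congr 1
    have e : θ₂ * (θ₁ / θ₂) = θ₁ := by field_simp
    rw [hc₁, hc₂, hp]
    linear_combination (-(μSE * a)) * e
  have hjensen : A₁ ≤ A₂ ^ p := by
    have hconc : ConcaveOn ℝ (Set.Ici 0) (fun x : ℝ => x ^ p) :=
      Real.concaveOn_rpow hp0.le hp1
    have hcont : ContinuousOn (fun x : ℝ => x ^ p) (Set.Ici 0) :=
      (Real.continuous_rpow_const hp0.le).continuousOn
    have hfs : ∀ᵐ ω ∂μ, (1 + X ω) ^ (-c₂) ∈ Set.Ici (0 : ℝ) := by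
      filter_upwards with ω
      exact (Real.rpow_pos_of_pos (by linarith [hX0 ω]) _).le
    have hfi := effectiveCapacity_aux_integrable μ X hX hX0 hc₂0.le
    have hgi : Integrable ((fun x : ℝ => x ^ p) ∘ fun ω => (1 + X ω) ^ (-c₂)) μ := by
      have := effectiveCapacity_aux_integrable μ X hX hX0 hc₁0.le
      refine this.congr ?_
      filter_upwards with ω
      exact (hcomp ω).symm
    have h := hconc.le_map_average hcont isClosed_Ici hfs hfi hgi
    rw [average_eq_integral, average_eq_integral] at h
    calc A₁ = ∫ ω, ((1 + X ω) ^ (-c₂)) ^ p ∂μ := by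
              rw [hA₁]; exact integral_congr_ae (by filter_upwards with ω using (hcomp ω).symm)
      _ ≤ A₂ ^ p := h
  have hlog : Real.log A₁ ≤ p * Real.log A₂ := by
    calc Real.log A₁ ≤ Real.log (A₂ ^ p) := Real.log_le_log hA₁pos hjensen
      _ = p * Real.log A₂ := Real.log_rpow hA₂pos _
  -- conclude
  unfold effectiveCapacity
  rw [← hA₁, ← hA₂]
  have key : (1 / (θ₁ * a)) * Real.log A₁ ≤ (1 / (θ₂ * a)) * Real.log A₂ := by
    have hmul := mul_le_mul_of_nonneg_left hlog
      (by positivity : (0:ℝ) ≤ 1 / (θ₁ * a))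
    calc (1 / (θ₁ * a)) * Real.log A₁ ≤ (1 / (θ₁ * a)) * (p * Real.log A₂) := hmul
      _ = (1 / (θ₂ * a)) * Real.log A₂ := by
          rw [hp]; field_simp
  linarith

/-- Equations (19) and (25) of the paper.  With `X l` the SINR of content object
`S_l` and QoS exponents `0 < θT l ≤ θC l` for cluster- and cloud-served requests,
the average effective capacity
`Ē(P) = P Σ_l E_l(θT l) + (1 - P) Σ_l E_l(θC l)` is nondecreasing on `[0, 1]`; in
particular the gain of cluster caching
`ΔĒ = Ē(P_hit) - Ē(0) = P_hit Σ_l (E_l(θT l) - E_l(θC l))` is nonnegative (and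
nondecreasing in the hit ratio `P_hit`). -/
theorem averageEffectiveCapacity_monotone_in_hit_ratio
    {Ω : Type*} [MeasurableSpace Ω] (μ : Measure Ω) [IsProbabilityMeasure μ]
    (L : ℕ) (hL : 1 ≤ L) (X : Fin L → Ω → ℝ)
    (hX : ∀ l, Measurable (X l)) (hX0 : ∀ l ω, 0 ≤ X l ω)
    (μSE a : ℝ) (hμSE : 0 < μSE) (ha : 0 < a)
    (θT θC : Fin L → ℝ) (hθT : ∀ l, 0 < θT l) (hθ : ∀ l, θT l ≤ θC l) :
    let Ebar : ℝ → ℝ := fun P =>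
      P * ∑ l, effectiveCapacity μ (X l) μSE a (θT l) +
        (1 - P) * ∑ l, effectiveCapacity μ (X l) μSE a (θC l)
    (∀ P₁ P₂ : ℝ, 0 ≤ P₁ → P₁ ≤ P₂ → P₂ ≤ 1 → Ebar P₁ ≤ Ebar P₂) ∧
      ∀ Phit : ℝ, 0 ≤ Phit → Phit ≤ 1 →
        Ebar Phit - Ebar 0
            = Phit * ∑ l, (effectiveCapacity μ (X l) μSE a (θT l) -
                effectiveCapacity μ (X l) μSE a (θC l)) ∧
          0 ≤ Ebar Phit - Ebar 0 := by
  intro Ebar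
  set ST : ℝ := ∑ l, effectiveCapacity μ (X l) μSE a (θT l) with hST
  set SC : ℝ := ∑ l, effectiveCapacity μ (X l) μSE a (θC l) with hSC
  have hkey : SC ≤ ST := by
    apply Finset.sum_le_sum
    intro l _
    exact effectiveCapacity_antitone μ (X l) (hX l) (hX0 l) μSE a hμSE ha (hθT l) (hθ l)
  have hEbar : ∀ P : ℝ, Ebar P = P * ST + (1 - P) * SC := fun P => rfl
  constructor
  · intro P₁ P₂ _ h12 _
    rw [hEbar, hEbar]
    nlinarith
  · intro Phit hP0 hP1
    constructor
    · rw [hEbar, hEbar, Finset.sum_sub_distrib, ← hST, ← hSC]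
      ring
    · rw [hEbar, hEbar]
      nlinarith
end

section
/- Let N be a finite set of players and v : Finset N → ℝ a coalition value function with v(∅) = 0. Let Π be a partition of N into nonempty blocks, let A, B be two distinct blocks of Π, and let k ∈ A. If v(B ∪ {k}) + v(A \ {k}) > v(A) + v(B) (condition C2), then the partition Π′ obtained from Π by moving k from A to B (replacing the blocks A and B by A \ {k} and B ∪ {k}, and deleting A \ {k} if it is empty) satisfies Σ_{C ∈ Π′} v(C) > Σ_{C ∈ Π} v(C). (A single hedonic move satisfying condition C2 strictly increases the total coalition utility.) -/
/-- A single hedonic move satisfying condition C2 strictly increases the total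
coalition utility.  `prt` is a partition of the finite player set `N` into nonempty,
pairwise disjoint blocks covering `N`; player `k ∈ A` moves from block `A` to block
`B`, yielding the partition in which `A` and `B` are replaced by `A \ {k}` and
`B ∪ {k}` (with `A \ {k}` deleted if it is empty). -/
theorem hedonic_move_increases_total_utility
    {N : Type*} [Fintype N] [DecidableEq N]
    (v : Finset N → ℝ) (hv : v ∅ = 0)
    (prt : Finset (Finset N))
    (hne : ∀ C ∈ prt, C.Nonempty)
    (hdisj : ∀ C ∈ prt, ∀ D ∈ prt, C ≠ D → Disjoint C D)
    (hcover : prt.sup id = Finset.univ)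
    (A B : Finset N) (hA : A ∈ prt) (hB : B ∈ prt) (hAB : A ≠ B)
    (k : N) (hk : k ∈ A)
    (hC2 : v A + v B < v (insert k B) + v (A.erase k)) :
    ∑ C ∈ prt, v C <
      ∑ C ∈ insert (insert k B)
          (((prt.erase A).erase B) ∪
            (if (A.erase k).Nonempty then {A.erase k} else ∅)), v C := by
  classical
  -- basic facts
  have hkB : k ∉ B := fun hkB =>
    (Finset.disjoint_left.1 (hdisj A hA B hB hAB) hk) hkB
  have hBA : B ∈ prt.erase A := Finset.mem_erase.2 ⟨fun h => hAB h.symm, hB⟩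
  -- insert k B is not a block of prt
  have hiB_notin : insert k B ∉ prt := by
    intro hmem
    have hne' : insert k B ≠ A → Disjoint (insert k B) A := hdisj _ hmem A hA
    have heq : insert k B = A := by
      by_contra h
      exact Finset.disjoint_left.1 (hne' h) (Finset.mem_insert_self k B) hk
    obtain ⟨b, hb⟩ := hne B hB
    have hbA : b ∈ A := heq ▸ Finset.mem_insert_of_mem hb
    exact Finset.disjoint_left.1 (hdisj A hA B hB hAB) hbA hb
  -- A.erase k is not a block of prt (when nonempty)
  have hAe_notin : (A.erase k).Nonempty → A.erase k ∉ prt := by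
    rintro ⟨x, hx⟩ hmem
    have hxA : x ∈ A := Finset.mem_of_mem_erase hx
    have heq : A.erase k = A := by
      by_contra h
      exact Finset.disjoint_left.1 (hdisj _ hmem A hA h) hx hxA
    exact Finset.notMem_erase k A (by rw [heq]; exact hk)
  -- old sum decomposition
  set S := ∑ C ∈ (prt.erase A).erase B, v C with hS
  have hold : ∑ C ∈ prt, v C = v A + v B + S := by
    rw [← Finset.sum_erase_add prt v hA, ← Finset.sum_erase_add (prt.erase A) v hBA]
    ring
  -- new sum decomposition
  have hiB_notin_T : insert k B ∉
      ((prt.erase A).erase B ∪ (if (A.erase k).Nonempty then {A.erase k} else ∅)) := by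
    intro h
    rcases Finset.mem_union.1 h with h | h
    · exact hiB_notin (Finset.mem_of_mem_erase (Finset.mem_of_mem_erase h))
    · split at h
      · have := Finset.mem_singleton.1 h
        have : k ∈ A.erase k := this ▸ Finset.mem_insert_self k B
        exact Finset.notMem_erase k A this
      · exact absurd h (Finset.notMem_empty _)
  have hnew : ∑ C ∈ insert (insert k B)
      (((prt.erase A).erase B) ∪ (if (A.erase k).Nonempty then {A.erase k} else ∅)), v C
      = v (insert k B) + v (A.erase k) + S := by
    rw [Finset.sum_insert hiB_notin_T]
    by_cases hne' : (A.erase k).Nonempty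
    · rw [if_pos hne']
      have hdisj' : Disjoint ((prt.erase A).erase B) {A.erase k} := by
        simp only [Finset.disjoint_singleton_right]
        intro h
        exact hAe_notin hne' (Finset.mem_of_mem_erase (Finset.mem_of_mem_erase h))
      rw [Finset.sum_union hdisj', Finset.sum_singleton]
      ring
    · rw [if_neg hne', Finset.union_empty]
      rw [Finset.not_nonempty_iff_eq_empty.1 hne', hv]
      ring
  rw [hold, hnew]
  linarith
end
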